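/- arXiv:1301.5109 — 4 statements merged into one kernel-verified Lean document; each statement's English description precedes it below -/
import Mathlib

section
/- Any point on the boundary of the convex hull of a compact set S ⊆ ℝ^d can be expressed as a convex combination of at most d points of S. -/
open scoped BigOperators

section Aux

variable {d : ℕ}

/-- The convex hull of a compact set in a finite-dimensional normed space is compact. -/
lemma aux_isCompact_convexHull {E : Type} [NormedAddCommGroup E] [NormedSpace ℝ E]
    [FiniteDimensional ℝ E] {S : Set E} (hS : IsCompact S) :
    IsCompact (convexHull ℝ S) := by
  classical
  rcases Set.eq_empty_or_nonempty S with rfl | ⟨s0, hs0⟩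
  · rw [convexHull_empty]; exact isCompact_empty
  set n := Module.finrank ℝ E + 1 with hn
  have hg : Continuous (fun z : (Fin n → ℝ) × (Fin n → E) => ∑ i, z.1 i • z.2 i) := by
    apply continuous_finset_sum
    intro i _
    exact ((continuous_apply i).comp continuous_fst).smul
      ((continuous_apply i).comp continuous_snd)
  have hK : IsCompact ((stdSimplex ℝ (Fin n)) ×ˢ (Set.univ.pi fun _ : Fin n => S)) :=
    IsCompact.prod (isCompact_stdSimplex (𝕜 := ℝ) (ι := Fin n)) (isCompact_univ_pi fun _ => hS)
  have himg : convexHull ℝ S = (fun z : (Fin n → ℝ) × (Fin n → E) => ∑ i, z.1 i • z.2 i) ''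
      ((stdSimplex ℝ (Fin n)) ×ˢ (Set.univ.pi fun _ : Fin n => S)) := by
    apply Set.Subset.antisymm
    · intro x hx
      rw [convexHull_eq_union] at hx
      simp only [Set.mem_iUnion] at hx
      obtain ⟨t, htS, hai, hxt⟩ := hx
      rw [Finset.convexHull_eq] at hxt
      obtain ⟨w, hw0, hw1, hcm⟩ := hxt
      rw [Finset.centerMass_eq_of_sum_1 _ _ hw1] at hcm
      simp only [id] at hcm
      have hk : t.card ≤ n := by
        have h1 := hai.card_le_finrank_succ
        rw [Fintype.card_coe] at h1
        have h2 := Submodule.finrank_le (vectorSpan ℝ (Set.range (Subtype.val :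
          {y // y ∈ t} → E)))
        rw [hn]
        omega
      set k := t.card with hkdef
      set e : Fin k ≃ t := t.equivFin.symm with he
      have hsum : ∀ (M : Type) (_ : AddCommMonoid M) (F : E → M),
          (∑ i : Fin n, if h : i.val < k then F (e ⟨i.val, h⟩) else 0) = ∑ y ∈ t, F y := by
        intro M _ F
        set T : Finset (Fin n) := Finset.univ.map (Fin.castLEEmb hk) with hT
        have h1 : (∑ i : Fin n, if h : i.val < k then F (e ⟨i.val, h⟩) else 0)
            = ∑ i ∈ T, if h : i.val < k then F (e ⟨i.val, h⟩) else 0 := by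
          refine (Finset.sum_subset (Finset.subset_univ T) ?_).symm
          intro i _ hiT
          have : ¬ i.val < k := by
            intro h
            apply hiT
            rw [hT]
            simp only [Finset.mem_map, Finset.mem_univ, true_and]
            exact ⟨⟨i.val, h⟩, Fin.ext rfl⟩
          rw [dif_neg this]
        have h2 : (∑ i ∈ T, if h : i.val < k then F (e ⟨i.val, h⟩) else 0)
            = ∑ j : Fin k, F (e j) := by
          rw [hT, Finset.sum_map]
          apply Finset.sum_congr rfl
          intro j _
          have hj : ((Fin.castLEEmb hk) j).val < k := j.isLt
          rw [dif_pos hj]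
          have hje : (⟨((Fin.castLEEmb hk) j).val, hj⟩ : Fin k) = j := Fin.ext rfl
          rw [hje]
        have h3 : (∑ j : Fin k, F (e j)) = ∑ y ∈ t, F y := by
          rw [Equiv.sum_comp e (fun y : t => F y), Finset.sum_coe_sort]
        rw [h1, h2, h3]
      refine ⟨(fun i => if h : i.val < k then w (e ⟨i.val, h⟩) else 0,
               fun i => if h : i.val < k then (e ⟨i.val, h⟩ : E) else s0),
              ⟨⟨?_, ?_⟩, ?_⟩, ?_⟩
      · intro i
        dsimp only
        split_ifs with h
        · exact hw0 _ (Finset.coe_mem _)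
        · exact le_refl 0
      · exact (hsum ℝ inferInstance w).trans hw1
      · rw [Set.mem_univ_pi]
        intro i
        dsimp only
        split_ifs with h
        · exact htS (Finset.coe_mem _)
        · exact hs0
      · dsimp only
        calc (∑ i : Fin n, (if h : i.val < k then w (e ⟨i.val, h⟩) else 0) •
                (if h : i.val < k then (e ⟨i.val, h⟩ : E) else s0))
            = ∑ i : Fin n, if h : i.val < k then w (e ⟨i.val, h⟩) • (e ⟨i.val, h⟩ : E) else 0 := by
              apply Finset.sum_congr rfl
              intro i _
              split_ifs with h
              · rfl
              · rw [zero_smul]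
          _ = ∑ y ∈ t, w y • y := hsum E inferInstance (fun y => w y • y)
          _ = x := hcm
    · rintro y ⟨⟨v, p⟩, ⟨hv, hpS⟩, rfl⟩
      apply (convex_convexHull ℝ S).sum_mem
      · intro i _; exact hv.1 i
      · exact hv.2
      · intro i _
        exact subset_convexHull ℝ S (hpS i (Set.mem_univ i))
  rw [himg]
  exact hK.image hg

open RealInnerProductSpace in
/-- Supporting hyperplane at a frontier point of the convex hull (for `d ≥ 1`). -/
lemma aux_support (S : Set (EuclideanSpace ℝ (Fin d))) (hS : IsCompact S)
    (x : EuclideanSpace ℝ (Fin d)) (hx : x ∈ frontier (convexHull ℝ S)) :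
    ∃ f : EuclideanSpace ℝ (Fin d) →L[ℝ] ℝ, f ≠ 0 ∧
      ∀ y ∈ convexHull ℝ S, f y ≤ f x := by
  set C := convexHull ℝ S with hC
  have hCcpt : IsCompact C := aux_isCompact_convexHull hS
  have hxC : x ∈ C := by
    have := hx.1
    rwa [hCcpt.isClosed.closure_eq] at this
  have hconv : Convex ℝ C := convex_convexHull ℝ S
  rcases Set.eq_empty_or_nonempty (interior C) with hint | hint
  · -- empty interior: C lies in a proper affine subspace
    have hspan : affineSpan ℝ C ≠ ⊤ := by
      intro h
      rw [← hconv.interior_nonempty_iff_affineSpan_eq_top] at h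
      exact h.ne_empty hint
    have hxspan : x ∈ affineSpan ℝ C := subset_affineSpan ℝ C hxC
    have hdir : (affineSpan ℝ C).direction ≠ ⊤ := by
      intro h
      exact hspan (AffineSubspace.direction_eq_top_iff_of_nonempty ⟨x, hxspan⟩ |>.mp h)
    have horth : ((affineSpan ℝ C).direction)ᗮ ≠ ⊥ := by
      intro h
      exact hdir (Submodule.orthogonal_eq_bot_iff.mp h)
    obtain ⟨u, hu, hu0⟩ := Submodule.exists_mem_ne_zero_of_ne_bot horth
    rw [Submodule.mem_orthogonal] at hu
    refine ⟨innerSL ℝ u, ?_, ?_⟩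
    · intro h
      have : (innerSL ℝ u) u = 0 := by rw [h]; rfl
      simp only [innerSL_apply_apply, real_inner_self_eq_norm_sq] at this
      exact hu0 (by simpa using this)
    · intro y hy
      have hyx : y - x ∈ (affineSpan ℝ C).direction := by
        simpa using AffineSubspace.vsub_mem_direction (subset_affineSpan ℝ C hy) hxspan
      have h0 : ⟪y - x, u⟫ = 0 := hu _ hyx
      rw [real_inner_comm, inner_sub_right] at h0
      simp only [innerSL_apply_apply]
      linarith
  · -- nonempty interior: separate x from the open interior
    have hxint : x ∉ interior C := hx.2
    obtain ⟨f, hf⟩ := geometric_hahn_banach_open_point hconv.interior isOpen_interior hxint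
    obtain ⟨a, ha⟩ := hint
    refine ⟨f, ?_, ?_⟩
    · intro h
      have := hf a ha
      rw [h] at this
      simp at this
    · intro y hy
      -- for t ∈ (0,1), t•a + (1-t)•y ∈ interior C, so t f a + (1-t) f y < f x; let t → 0
      have hev : ∀ᶠ t in nhdsWithin (0:ℝ) (Set.Ioi 0),
          t * f a + (1 - t) * f y ≤ f x := by
        filter_upwards [Ioo_mem_nhdsGT_of_mem (by constructor <;> norm_num :
          (0:ℝ) ∈ Set.Ico 0 1)] with t ht
        have hmem : t • a + (1 - t) • y ∈ interior C :=
          hconv.combo_interior_self_mem_interior ha hy ht.1 (by linarith [ht.2]) (by ring)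
        have := (hf _ hmem).le
        rwa [map_add, map_smul, map_smul, smul_eq_mul, smul_eq_mul] at this
      have htend : Filter.Tendsto (fun t : ℝ => t * f a + (1 - t) * f y)
          (nhdsWithin (0:ℝ) (Set.Ioi 0)) (nhds (f y)) := by
        have : Filter.Tendsto (fun t : ℝ => t * f a + (1 - t) * f y)
            (nhds (0:ℝ)) (nhds ((0:ℝ) * f a + (1 - 0) * f y)) := by
          apply Filter.Tendsto.add
          · exact (continuous_id.mul continuous_const).tendsto 0
          · exact ((continuous_const.sub continuous_id).mul continuous_const).tendsto 0
        have h0 : (0:ℝ) * f a + (1 - 0) * f y = f y := by ring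
        rw [h0] at this
        exact this.mono_left nhdsWithin_le_nhds
      exact le_of_tendsto htend hev

end Aux

/-- Any point on the boundary of the convex hull of a compact set `S ⊆ ℝ^d` can be
expressed as a convex combination of at most `d` points of `S`. -/
theorem stmt_0 (d : ℕ) (S : Set (EuclideanSpace ℝ (Fin d))) (hS : IsCompact S)
    (x : EuclideanSpace ℝ (Fin d)) (hx : x ∈ frontier (convexHull ℝ S)) :
    ∃ (t : Finset (EuclideanSpace ℝ (Fin d))) (w : EuclideanSpace ℝ (Fin d) → ℝ),
      ↑t ⊆ S ∧ t.card ≤ d ∧ (∀ y ∈ t, 0 ≤ w y) ∧ (∑ y ∈ t, w y) = 1 ∧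
      (∑ y ∈ t, w y • y) = x := by
  classical
  rcases Nat.eq_zero_or_pos d with hd | hd
  · -- d = 0 : the space is a subsingleton, so the frontier is empty
    exfalso
    subst hd
    have hsub : Subsingleton (EuclideanSpace ℝ (Fin 0)) := inferInstance
    rcases Set.eq_empty_or_nonempty (convexHull ℝ S) with h | h
    · rw [h, frontier_empty] at hx; exact hx
    · have : convexHull ℝ S = Set.univ :=
        Set.eq_univ_of_forall fun z => by
          obtain ⟨a, ha⟩ := h
          rwa [Subsingleton.elim z a]
      rw [this, frontier_univ] at hx; exact hx
  · set C := convexHull ℝ S with hC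
    have hCcpt : IsCompact C := aux_isCompact_convexHull hS
    have hxC : x ∈ C := by
      have := hx.1
      rwa [hCcpt.isClosed.closure_eq] at this
    obtain ⟨f, hf0, hfle⟩ := aux_support S hS x hx
    -- Carathéodory
    rw [hC, convexHull_eq_union] at hxC
    simp only [Set.mem_iUnion] at hxC
    obtain ⟨t, htS, hai, hxt⟩ := hxC
    rw [Finset.convexHull_eq] at hxt
    obtain ⟨w, hw0, hw1, hcm⟩ := hxt
    rw [Finset.centerMass_eq_of_sum_1 _ _ hw1] at hcm
    simp only [id] at hcm
    set t' : Finset (EuclideanSpace ℝ (Fin d)) := t.filter fun y => w y ≠ 0 with ht'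
    have ht't : (t' : Set (EuclideanSpace ℝ (Fin d))) ⊆ (t : Set (EuclideanSpace ℝ (Fin d))) := by
      intro y hy
      exact Finset.filter_subset _ _ hy
    have hw1' : ∑ y ∈ t', w y = 1 := by
      have h := Finset.sum_filter_of_ne (s := t) (f := w) (p := fun y => w y ≠ 0)
        (fun y _ hy => hy)
      rw [ht']
      exact h.trans hw1
    have hcm' : ∑ y ∈ t', w y • y = x := by
      have h := Finset.sum_filter_of_ne (s := t) (f := fun y => w y • y)
        (p := fun y => w y ≠ 0) (fun y _ hy hw => hy (by show w y • y = 0; rw [hw, zero_smul]))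
      rw [ht']
      exact h.trans hcm
    have hwpos : ∀ y ∈ t', 0 < w y := by
      intro y hy
      rw [ht', Finset.mem_filter] at hy
      exact lt_of_le_of_ne (hw0 y hy.1) (Ne.symm hy.2)
    -- all points of t' lie on the hyperplane f = f x
    have hfx : ∑ y ∈ t', w y * f y = f x := by
      have := congrArg f hcm'
      rw [map_sum] at this
      simpa [smul_eq_mul] using this
    have hfeq : ∀ y ∈ t', f y = f x := by
      intro y hy
      by_contra hne
      have hyS : y ∈ C := subset_convexHull ℝ S (htS (ht't hy))
      have hlt : f y < f x := lt_of_le_of_ne (hfle y hyS) hne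
      have hsum : ∑ z ∈ t', w z * f z < ∑ z ∈ t', w z * f x := by
        apply Finset.sum_lt_sum
        · intro z hz
          exact mul_le_mul_of_nonneg_left
            (hfle z (subset_convexHull ℝ S (htS (ht't hz)))) (hwpos z hz).le
        · exact ⟨y, hy, mul_lt_mul_of_pos_left hlt (hwpos y hy)⟩
      rw [hfx, ← Finset.sum_mul, hw1', one_mul] at hsum
      exact lt_irrefl _ hsum
    -- cardinality bound
    have ht'ne : t'.Nonempty := by
      rcases Finset.eq_empty_or_nonempty t' with h | h
      · rw [h, Finset.sum_empty] at hw1'; norm_num at hw1'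
      · exact h
    have hai' : AffineIndependent ℝ
        (fun y : (t' : Set (EuclideanSpace ℝ (Fin d))) => (y : EuclideanSpace ℝ (Fin d))) :=
      AffineIndependent.mono hai ht't
    have hcard : t'.card ≤ d := by
      obtain ⟨n, hn⟩ : ∃ n, t'.card = n + 1 :=
        ⟨t'.card - 1, (Nat.succ_pred_eq_of_pos (Finset.card_pos.mpr ht'ne)).symm⟩
      have hfin : Module.finrank ℝ
          (vectorSpan ℝ ((t' : Set (EuclideanSpace ℝ (Fin d))))) = n := by
        have := hai'.finrank_vectorSpan (n := n) ?_
        · rwa [Subtype.range_coe] at this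
        · have h := (Fintype.card_congr (Equiv.subtypeEquivRight
              (fun y => Finset.mem_coe))).trans (Fintype.card_coe t')
          exact (Fintype.card_congr (Equiv.refl _)).trans (h.trans hn)
      have hker : vectorSpan ℝ ((t' : Set (EuclideanSpace ℝ (Fin d)))) ≤
          LinearMap.ker (f : EuclideanSpace ℝ (Fin d) →ₗ[ℝ] ℝ) := by
        rw [vectorSpan_def]
        apply Submodule.span_le.mpr
        rintro v ⟨a, ha, b, hb, rfl⟩
        simp only [SetLike.mem_coe, LinearMap.mem_ker, vsub_eq_sub]
        have hsub : f (a - b) = f a - f b := map_sub f a b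
        rw [ContinuousLinearMap.coe_coe]
        rw [hsub, hfeq a ha, hfeq b hb, sub_self]
      have hrange : LinearMap.range (f : EuclideanSpace ℝ (Fin d) →ₗ[ℝ] ℝ) = ⊤ := by
        rw [LinearMap.range_eq_top]
        intro c
        obtain ⟨v, hv⟩ : ∃ v, f v ≠ 0 := by
          by_contra h
          push_neg at h
          exact hf0 (ContinuousLinearMap.ext fun v => by simp [h v])
        exact ⟨(c / f v) • v, by simp [hv, div_mul_cancel₀]⟩
      have hrk : Module.finrank ℝ (LinearMap.range (f : EuclideanSpace ℝ (Fin d) →ₗ[ℝ] ℝ)) +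
          Module.finrank ℝ (LinearMap.ker (f : EuclideanSpace ℝ (Fin d) →ₗ[ℝ] ℝ)) = d := by
        rw [LinearMap.finrank_range_add_finrank_ker]
        simp [finrank_euclideanSpace_fin]
      rw [hrange, finrank_top] at hrk
      have h1 : Module.finrank ℝ ℝ = 1 := Module.finrank_self ℝ
      have hkd : Module.finrank ℝ
          (LinearMap.ker (f : EuclideanSpace ℝ (Fin d) →ₗ[ℝ] ℝ)) = d - 1 := by omega
      have hle := Submodule.finrank_mono hker
      rw [hfin, hkd] at hle
      omega
    exact ⟨t', w, fun y hy => htS (ht't hy), hcard, fun y hy => (hwpos y hy).le, hw1', hcm'⟩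
end

section
/- For any real constant 0 ≤ τ < 1, the limit as n → ∞ of (1/n)·log₂(C_n(arccos τ)/C_n(π)) equals (1/2)·log₂(1 − τ²), where C_n(θ) is the surface area of a spherical cap of half-angle θ on the unit n-sphere. -/
open scoped BigOperators

/-- Surface area of the spherical cap of half-angle `θ` on the unit `n`-sphere,
up to the dimensional constant `A_{n-1}` (which cancels in all ratios considered):
`C_n(θ) = A_{n-1} ∫₀^θ sin^{n-2}(φ) dφ`. -/
noncomputable def capC (n : ℕ) (θ : ℝ) : ℝ :=
  ∫ φ in (0:ℝ)..θ, (Real.sin φ) ^ (n - 2)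

open Real Filter intervalIntegral

lemma capL (m : ℕ) {θ : ℝ} (h0 : 0 ≤ θ) (h : θ ≤ π/2) :
    Real.sin θ ^ (m+1) / (m+1) ≤ ∫ φ in (0:ℝ)..θ, Real.sin φ ^ m := by
  have key : (∫ φ in (0:ℝ)..θ, Real.sin φ ^ m * Real.cos φ)
      = Real.sin θ ^ (m+1) / ((m:ℝ)+1) := by
    have h2 := integral_sin_pow_mul_cos_pow_odd (a := 0) (b := θ) m 0
    simpa [integral_pow] using h2
  have : Real.sin θ ^ (m+1) / ((m:ℝ)+1) ≤ ∫ φ in (0:ℝ)..θ, Real.sin φ ^ m := by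
    rw [← key]
    apply intervalIntegral.integral_mono_on h0
    · exact (Continuous.intervalIntegrable (by fun_prop) _ _)
    · exact (Continuous.intervalIntegrable (by fun_prop) _ _)
    · intro x hx
      have hsx : 0 ≤ Real.sin x := Real.sin_nonneg_of_nonneg_of_le_pi hx.1
        (le_trans hx.2 (by linarith [Real.pi_pos]))
      have hcx : Real.cos x ≤ 1 := Real.cos_le_one x
      nlinarith [pow_nonneg hsx m]
  exact_mod_cast this

lemma capU (m : ℕ) {θ : ℝ} (h0 : 0 ≤ θ) (h : θ ≤ π/2) :
    (∫ φ in (0:ℝ)..θ, Real.sin φ ^ m) ≤ θ * Real.sin θ ^ m := by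
  have := intervalIntegral.integral_mono_on (μ := MeasureTheory.volume)
    (f := fun φ => Real.sin φ ^ m) (g := fun _ => Real.sin θ ^ m) h0
    (Continuous.intervalIntegrable (by fun_prop) _ _)
    (Continuous.intervalIntegrable (by fun_prop) _ _)
    (fun x hx => by
      have hsx : 0 ≤ Real.sin x := Real.sin_nonneg_of_nonneg_of_le_pi hx.1
        (le_trans hx.2 (by linarith [Real.pi_pos]))
      exact pow_le_pow_left₀ hsx
        (Real.strictMonoOn_sin.monotoneOn ⟨by linarith [Real.pi_pos, hx.1], by linarith [hx.2]⟩
          ⟨by linarith [Real.pi_pos], h⟩ hx.2) m)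
  simpa using this

lemma denomL (m : ℕ) : (1:ℝ) / (m+1) ≤ ∫ φ in (0:ℝ)..π, Real.sin φ ^ m := by
  have hπ := Real.pi_pos
  have h1 := capL m (θ := π/2) (by linarith) le_rfl
  simp [Real.sin_pi_div_two] at h1
  have h2 : (∫ φ in (0:ℝ)..(π/2), Real.sin φ ^ m) ≤ ∫ φ in (0:ℝ)..π, Real.sin φ ^ m := by
    apply intervalIntegral.integral_mono_interval (le_refl (0:ℝ)) (by linarith) (by linarith)
    · filter_upwards [MeasureTheory.ae_restrict_mem measurableSet_Ioc] with x hx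
      exact pow_nonneg (Real.sin_nonneg_of_nonneg_of_le_pi (le_of_lt hx.1) hx.2) m
    · exact Continuous.intervalIntegrable (by fun_prop) _ _
  rw [one_div]
  exact le_trans h1 h2

lemma denomU (m : ℕ) : (∫ φ in (0:ℝ)..π, Real.sin φ ^ m) ≤ π := by
  have hπ := Real.pi_pos
  have := intervalIntegral.integral_mono_on (μ := MeasureTheory.volume)
    (f := fun φ => Real.sin φ ^ m) (g := fun _ => (1:ℝ)) (by linarith)
    (Continuous.intervalIntegrable (by fun_prop) _ _)
    (Continuous.intervalIntegrable (by fun_prop) _ _)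
    (fun x hx => pow_le_one₀ (Real.sin_nonneg_of_nonneg_of_le_pi hx.1 hx.2) (Real.sin_le_one x))
  simpa using this

lemma log_lin (a b : ℝ) (ha : 0 < a) :
    Tendsto (fun n : ℕ => Real.log (a*n + b) / n) atTop (nhds 0) := by
  have h1 : Tendsto (fun n : ℕ => a*(n:ℝ)+b) atTop atTop :=
    tendsto_atTop_add_const_right _ b
      ((tendsto_natCast_atTop_atTop).const_mul_atTop ha)
  have h2 : (fun n : ℕ => Real.log (a*n+b)) =o[atTop] (fun n : ℕ => a*(n:ℝ)+b) :=
    Real.isLittleO_log_id_atTop.comp_tendsto h1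
  have h3 : (fun n : ℕ => a*(n:ℝ)+b) =O[atTop] (fun n : ℕ => (n:ℝ)) := by
    rw [Asymptotics.isBigO_iff]
    refine ⟨a + |b|, Filter.eventually_atTop.2 ⟨1, fun n hn => ?_⟩⟩
    have hn1 : (1:ℝ) ≤ n := by exact_mod_cast hn
    have : |a*(n:ℝ)+b| ≤ a*n + |b| := by
      calc |a*(n:ℝ)+b| ≤ |a*(n:ℝ)| + |b| := abs_add_le _ _
        _ = a*n + |b| := by rw [abs_of_nonneg (by positivity)]
    rw [Real.norm_eq_abs, Real.norm_eq_abs, abs_of_nonneg (by positivity : (0:ℝ) ≤ (n:ℝ))]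
    nlinarith [abs_nonneg b]
  exact (h2.trans_isBigO h3).tendsto_div_nhds_zero


lemma lo_tendsto (c : ℝ) :
    Tendsto (fun n : ℕ => ((n:ℝ)-1)/n * c - Real.log (π*n - π) / (n * Real.log 2))
      atTop (nhds c) := by
  have A : Tendsto (fun n : ℕ => ((n:ℝ)-1)/n * c) atTop (nhds c) := by
    have h1 : Tendsto (fun n : ℕ => (1 - 1/(n:ℝ)) * c) atTop (nhds ((1-0) * c)) :=
      (tendsto_const_nhds.sub tendsto_one_div_atTop_nhds_zero_nat).mul_const c
    rw [show ((1:ℝ)-0)*c = c by ring] at h1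
    apply h1.congr'
    filter_upwards [eventually_ge_atTop 1] with n hn
    have : (n:ℝ) ≠ 0 := by positivity
    field_simp
  have B : Tendsto (fun n : ℕ => Real.log (π*n - π) / (n * Real.log 2)) atTop (nhds 0) := by
    have h2 := (log_lin π (-π) Real.pi_pos).mul_const (Real.log 2)⁻¹
    rw [zero_mul] at h2
    apply h2.congr
    intro n
    rw [← div_div, sub_eq_add_neg]; ring
  simpa using A.sub B

lemma up_tendsto (c : ℝ) :
    Tendsto (fun n : ℕ => ((n:ℝ)-2)/n * c + Real.log (π/2*n - π/2) / (n * Real.log 2))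
      atTop (nhds c) := by
  have A : Tendsto (fun n : ℕ => ((n:ℝ)-2)/n * c) atTop (nhds c) := by
    have h0 : Tendsto (fun n : ℕ => (2:ℝ)/(n:ℝ)) atTop (nhds 0) :=
      tendsto_const_div_atTop_nhds_zero_nat 2
    have h1 : Tendsto (fun n : ℕ => (1 - 2/(n:ℝ)) * c) atTop (nhds ((1-0) * c)) :=
      (tendsto_const_nhds.sub h0).mul_const c
    rw [show ((1:ℝ)-0)*c = c by ring] at h1
    apply h1.congr'
    filter_upwards [eventually_ge_atTop 1] with n hn
    have : (n:ℝ) ≠ 0 := by positivity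
    field_simp
  have B : Tendsto (fun n : ℕ => Real.log (π/2*n - π/2) / (n * Real.log 2)) atTop (nhds 0) := by
    have h2 := (log_lin (π/2) (-(π/2)) (by positivity)).mul_const (Real.log 2)⁻¹
    rw [zero_mul] at h2
    apply h2.congr
    intro n
    rw [← div_div, sub_eq_add_neg]; ring
  simpa using A.add B

/-- For `0 ≤ τ < 1`, `lim_{n→∞} (1/n) log₂ (C_n(arccos τ)/C_n(π)) = (1/2) log₂ (1 - τ²)`. -/
theorem stmt_2 (τ : ℝ) (hτ0 : 0 ≤ τ) (hτ1 : τ < 1) :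
    Filter.Tendsto
      (fun n : ℕ => (1 / (n : ℝ)) *
        Real.logb 2 (capC n (Real.arccos τ) / capC n Real.pi))
      Filter.atTop (nhds ((1 / 2) * Real.logb 2 (1 - τ ^ 2))) := by
  have hπ := Real.pi_pos
  have hlog2 : (0:ℝ) < Real.log 2 := Real.log_pos one_lt_two
  set θ := Real.arccos τ with hθdef
  have h1τ : 0 < 1 - τ^2 := by nlinarith
  have hθ0 : 0 < θ := Real.arccos_pos.2 hτ1
  have hθπ2 : θ ≤ π/2 := Real.arccos_le_pi_div_two.2 hτ0
  set s := Real.sin θ with hsdef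
  have hseq : s = Real.sqrt (1 - τ^2) := Real.sin_arccos τ
  have hs0 : 0 < s := by rw [hseq]; exact Real.sqrt_pos.2 h1τ
  have hs1 : s ≤ 1 := Real.sin_le_one θ
  set c := Real.logb 2 s with hcdef
  have hc : (1/2 : ℝ) * Real.logb 2 (1 - τ^2) = c := by
    rw [hcdef, hseq, Real.logb, Real.logb, Real.log_sqrt (le_of_lt h1τ)]
    ring
  rw [hc]
  refine tendsto_of_tendsto_of_tendsto_of_le_of_le' (lo_tendsto c) (up_tendsto c) ?_ ?_
  · -- lower bound
    filter_upwards [eventually_ge_atTop 3] with n hn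
    set m := n - 2 with hmdef
    have hn2 : 2 ≤ n := by omega
    have hm : (m:ℝ) = (n:ℝ) - 2 := by
      rw [hmdef]; push_cast [Nat.cast_sub hn2]; ring
    have hm1 : (m:ℝ) + 1 = (n:ℝ) - 1 := by rw [hm]; ring
    have hn0 : (0:ℝ) < n := by positivity
    have hNlo := capL m hθ0.le hθπ2
    have hDup := denomU m
    have hDlo := denomL m
    have hNpos : (0:ℝ) < ∫ φ in (0:ℝ)..θ, Real.sin φ ^ m :=
      lt_of_lt_of_le (by positivity) hNlo
    have hDpos : (0:ℝ) < ∫ φ in (0:ℝ)..π, Real.sin φ ^ m :=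
      lt_of_lt_of_le (by positivity) hDlo
    have hDub : (∫ φ in (0:ℝ)..π, Real.sin φ ^ m) ≤ ((m:ℝ)+1) * π := by
      have h0 : (0:ℝ) ≤ (m:ℝ) := Nat.cast_nonneg m
      nlinarith
    have hLb : s^(m+1) / (((m:ℝ)+1) * π) ≤
        (∫ φ in (0:ℝ)..θ, Real.sin φ ^ m) / ∫ φ in (0:ℝ)..π, Real.sin φ ^ m := by
      rw [← div_div]
      exact div_le_div₀ hNpos.le hNlo hDpos hDup
    have hlogb : Real.logb 2 (s^(m+1) / (((m:ℝ)+1) * π)) ≤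
        Real.logb 2 ((∫ φ in (0:ℝ)..θ, Real.sin φ ^ m) / ∫ φ in (0:ℝ)..π, Real.sin φ ^ m) :=
      Real.logb_le_logb_of_le one_lt_two (by positivity) hLb
    have key : ((n:ℝ)-1)/n * c - Real.log (π*n - π) / (n * Real.log 2)
        = (1/(n:ℝ)) * Real.logb 2 (s^(m+1) / (((m:ℝ)+1) * π)) := by
      rw [Real.logb_div (by positivity) (by positivity), Real.logb_pow,
        Real.logb_mul (by positivity) (ne_of_gt hπ)]
      rw [show Real.logb 2 ((m:ℝ)+1) + Real.logb 2 π = Real.log (π*n - π) / Real.log 2 by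
        rw [← Real.logb_mul (by positivity) (ne_of_gt hπ),
          show ((m:ℝ)+1) * π = π*n - π by rw [hm1]; ring, Real.logb]]
      push_cast
      rw [hm]
      ring
    rw [key]
    simp only [capC]
    show _ ≤ (1/(n:ℝ)) * Real.logb 2 ((∫ φ in (0:ℝ)..θ, Real.sin φ ^ (n-2)) / _)
    exact mul_le_mul_of_nonneg_left hlogb (by positivity)
  · -- upper bound
    filter_upwards [eventually_ge_atTop 3] with n hn
    set m := n - 2 with hmdef
    have hn2 : 2 ≤ n := by omega
    have hm : (m:ℝ) = (n:ℝ) - 2 := by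
      rw [hmdef]; push_cast [Nat.cast_sub hn2]; ring
    have hm1 : (m:ℝ) + 1 = (n:ℝ) - 1 := by rw [hm]; ring
    have hn0 : (0:ℝ) < n := by positivity
    have hNlo := capL m hθ0.le hθπ2
    have hNup := capU m hθ0.le hθπ2
    have hDlo := denomL m
    have hNpos : (0:ℝ) < ∫ φ in (0:ℝ)..θ, Real.sin φ ^ m :=
      lt_of_lt_of_le (by positivity) hNlo
    have hDpos : (0:ℝ) < ∫ φ in (0:ℝ)..π, Real.sin φ ^ m :=
      lt_of_lt_of_le (by positivity) hDlo
    have hUb : (∫ φ in (0:ℝ)..θ, Real.sin φ ^ m) / (∫ φ in (0:ℝ)..π, Real.sin φ ^ m)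
        ≤ (π/2 * ((m:ℝ)+1)) * s^m := by
      have h1 : (∫ φ in (0:ℝ)..θ, Real.sin φ ^ m) / (∫ φ in (0:ℝ)..π, Real.sin φ ^ m)
          ≤ (∫ φ in (0:ℝ)..θ, Real.sin φ ^ m) * ((m:ℝ)+1) := by
        rw [div_le_iff₀ hDpos]
        have hDlo' : (1:ℝ) ≤ (∫ φ in (0:ℝ)..π, Real.sin φ ^ m) * ((m:ℝ)+1) := by
          rw [div_le_iff₀ (by positivity : (0:ℝ) < (m:ℝ)+1)] at hDlo
          linarith [hDlo]
        nlinarith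
      have h2 : (∫ φ in (0:ℝ)..θ, Real.sin φ ^ m) * ((m:ℝ)+1)
          ≤ (π/2 * ((m:ℝ)+1)) * s^m := by
        have : (∫ φ in (0:ℝ)..θ, Real.sin φ ^ m) ≤ (π/2) * s^m :=
          le_trans hNup (by nlinarith [pow_nonneg hs0.le m])
        nlinarith [this, pow_nonneg hs0.le m]
      linarith
    have hlogb : Real.logb 2 ((∫ φ in (0:ℝ)..θ, Real.sin φ ^ m) / ∫ φ in (0:ℝ)..π, Real.sin φ ^ m)
        ≤ Real.logb 2 ((π/2 * ((m:ℝ)+1)) * s^m) :=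
      Real.logb_le_logb_of_le one_lt_two (by positivity) hUb
    have key : ((n:ℝ)-2)/n * c + Real.log (π/2*n - π/2) / (n * Real.log 2)
        = (1/(n:ℝ)) * Real.logb 2 ((π/2 * ((m:ℝ)+1)) * s^m) := by
      rw [Real.logb_mul (by positivity) (by positivity), Real.logb_pow]
      rw [show Real.logb 2 (π/2 * ((m:ℝ)+1)) = Real.log (π/2*n - π/2) / Real.log 2 by
        rw [show (π/2) * ((m:ℝ)+1) = π/2*n - π/2 by rw [hm1]; ring, Real.logb]]
      rw [hm]
      ring
    rw [key]
    simp only [capC]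
    show (1/(n:ℝ)) * Real.logb 2 ((∫ φ in (0:ℝ)..θ, Real.sin φ ^ (n-2)) / _) ≤ _
    exact mul_le_mul_of_nonneg_left hlogb (by positivity)
end

section
/- Under the constraints 0 ≤ σ_A² ≤ D_d and κ² ≤ D_e σ_U², with D_d, σ_U² > 0 and √(D_e σ_U²) < min{D_d, σ_U² σ_X²/(σ_X²+σ_U²)} ≤ min{D_d, σ_U²}, the supremum of (1/2)·log(2πe·(σ_A² σ_U² − κ²)/(σ_A² + σ_U² + 2κ)) is attained at σ_A² = D_d and κ = −√(D_e σ_U²), giving value (1/2)·log(2πe·σ_U²·(D_d − D_e)/(σ_U² + D_d − 2√(σ_U² D_e))). -/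
/-- Under the constraints `0 ≤ σ_A² ≤ D_d`, `κ² ≤ D_e σ_U²`, `κ² ≤ σ_A² σ_U²`, the
objective `(1/2) log (2πe (σ_A²σ_U² − κ²)/(σ_A² + σ_U² + 2κ))` is maximized at
`σ_A² = D_d`, `κ = −√(D_e σ_U²)` (equivalently, since `log` is monotone, the ratio
`(σ_A²σ_U² − κ²)/(σ_A² + σ_U² + 2κ)` is maximized there), giving value
`(1/2) log (2πe σ_U² (D_d − D_e)/(σ_U² + D_d − 2√(σ_U² D_e)))`. -/
theorem stmt_10 (Dd De sU2 : ℝ) (hDd : 0 < Dd) (hDe : 0 ≤ De) (hU : 0 < sU2)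
    (h1 : Real.sqrt (De * sU2) < min Dd sU2) (h2 : De < Dd) :
    -- feasibility of the maximizer
    ((-Real.sqrt (De * sU2)) ^ 2 ≤ De * sU2 ∧
      (-Real.sqrt (De * sU2)) ^ 2 ≤ Dd * sU2) ∧
    -- maximality over the feasible set
    (∀ sA2 κ : ℝ, 0 ≤ sA2 → sA2 ≤ Dd → κ ^ 2 ≤ De * sU2 → κ ^ 2 ≤ sA2 * sU2 →
      (sA2 * sU2 - κ ^ 2) / (sA2 + sU2 + 2 * κ) ≤
        (Dd * sU2 - (-Real.sqrt (De * sU2)) ^ 2) /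
          (Dd + sU2 + 2 * (-Real.sqrt (De * sU2)))) ∧
    -- the attained value
    (1 / 2) * Real.log (2 * Real.pi * Real.exp 1 *
        ((Dd * sU2 - (-Real.sqrt (De * sU2)) ^ 2) /
          (Dd + sU2 + 2 * (-Real.sqrt (De * sU2))))) =
      (1 / 2) * Real.log (2 * Real.pi * Real.exp 1 *
        (sU2 * (Dd - De) / (sU2 + Dd - 2 * Real.sqrt (sU2 * De)))) := by
  set s := Real.sqrt (De * sU2) with hs
  have hs0 : 0 ≤ s := Real.sqrt_nonneg _
  have hs2 : s ^ 2 = De * sU2 := Real.sq_sqrt (by positivity)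
  have hsD : s < Dd := lt_of_lt_of_le h1 (min_le_left _ _)
  have hsU : s < sU2 := lt_of_lt_of_le h1 (min_le_right _ _)
  have hden : 0 < Dd + sU2 + 2 * (-s) := by nlinarith
  have hnum : 0 < Dd * sU2 - (-s) ^ 2 := by
    rw [neg_sq, hs2]; nlinarith
  refine ⟨⟨by rw [neg_sq, hs2], by rw [neg_sq, hs2]; nlinarith⟩, ?_, ?_⟩
  · intro A κ hA hAD hκe hκA
    have hκs : κ ^ 2 ≤ s ^ 2 := by rw [hs2]; exact hκe
    have hκlb : -s ≤ κ := by nlinarith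
    have hAnn : (0:ℝ) ≤ A + sU2 + 2 * κ := by nlinarith [sq_nonneg (A - sU2)]
    rcases lt_or_eq_of_le hAnn with hpos | hzero
    · have hposD : 0 < Dd + sU2 + 2 * κ := by linarith
      calc (A * sU2 - κ ^ 2) / (A + sU2 + 2 * κ)
          ≤ (Dd * sU2 - κ ^ 2) / (Dd + sU2 + 2 * κ) := by
            rw [div_le_div_iff₀ hpos hposD]
            nlinarith [mul_nonneg (sub_nonneg.2 hAD) (sq_nonneg (sU2 + κ))]
        _ ≤ (Dd * sU2 - (-s) ^ 2) / (Dd + sU2 + 2 * (-s)) := by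
            rw [div_le_div_iff₀ hposD hden]
            nlinarith [mul_nonneg (sq_nonneg (s + κ)) hden.le,
              mul_nonneg (mul_nonneg (by linarith : (0:ℝ) ≤ s + κ)
                (by linarith : (0:ℝ) ≤ Dd - s)) (by linarith : (0:ℝ) ≤ sU2 - s)]
    · rw [← hzero, div_zero]
      exact le_of_lt (div_pos hnum hden)
  · have key : (Dd * sU2 - (-s) ^ 2) / (Dd + sU2 + 2 * (-s)) =
        sU2 * (Dd - De) / (sU2 + Dd - 2 * Real.sqrt (sU2 * De)) := by
      rw [mul_comm sU2 De, ← hs, neg_sq, hs2]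
      ring
    rw [key]
end

section
/- Let σ_X², σ_U² > 0 and D_d, D_e ≥ 0 satisfy √(D_e σ_U²) < min{D_d, σ_X²σ_U²/(σ_X²+σ_U²)} and D_d < σ_X²(1 − √(D_e/σ_U²))² + D_e. Define b = √(D_e/σ_U²), σ_W² = σ_X²(D_d − D_e)/(σ_X²(1−b)² + D_e − D_d), and a = σ_X²(1−b)/(σ_X² + σ_W²). Then σ_W² > 0, (1−a−b)²σ_X² + a²σ_W² + b²σ_U² = D_d, b²σ_U² = D_e, and (1/2)log((σ_X²σ_U²+σ_X²σ_W²+σ_U²σ_W²)/((σ_X²+σ_U²)σ_W²)) = (1/2)log(σ_X²(σ_U² + D_d − 2√(σ_U²D_e))/((σ_X²+σ_U²)(D_d − D_e))). -/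
/-- Suppose `√(D_e σ_U²) < min{D_d, σ_X²σ_U²/(σ_X²+σ_U²)}` and
`D_d < σ_X²(1 − √(D_e/σ_U²))² + D_e` (with `σ_X², σ_U² > 0`, `D_d, D_e ≥ 0`). With
`b = √(D_e/σ_U²)`, `σ_W² = σ_X²(D_d − D_e)/(σ_X²(1−b)² + D_e − D_d)` and
`a = σ_X²(1−b)/(σ_X² + σ_W²)`, one has `σ_W² > 0`,
`(1−a−b)²σ_X² + a²σ_W² + b²σ_U² = D_d`, `b²σ_U² = D_e`, and
`(1/2)log₂((σ_X²σ_U²+σ_X²σ_W²+σ_U²σ_W²)/((σ_X²+σ_U²)σ_W²))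
 = (1/2)log₂(σ_X²(σ_U² + D_d − 2√(σ_U²D_e))/((σ_X²+σ_U²)(D_d − D_e)))`. -/
theorem stmt_15 (sX2 sU2 Dd De : ℝ) (hX : 0 < sX2) (hU : 0 < sU2)
    (hDd : 0 ≤ Dd) (hDe : 0 ≤ De)
    (h1 : Real.sqrt (De * sU2) < min Dd (sX2 * sU2 / (sX2 + sU2)))
    (h2 : Dd < sX2 * (1 - Real.sqrt (De / sU2)) ^ 2 + De)
    (b sW2 a : ℝ)
    (hb : b = Real.sqrt (De / sU2))
    (hsW : sW2 = sX2 * (Dd - De) / (sX2 * (1 - b) ^ 2 + De - Dd))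
    (ha : a = sX2 * (1 - b) / (sX2 + sW2)) :
    0 < sW2 ∧
    (1 - a - b) ^ 2 * sX2 + a ^ 2 * sW2 + b ^ 2 * sU2 = Dd ∧
    b ^ 2 * sU2 = De ∧
    (1 / 2) * Real.logb 2 ((sX2 * sU2 + sX2 * sW2 + sU2 * sW2) / ((sX2 + sU2) * sW2)) =
      (1 / 2) * Real.logb 2
        (sX2 * (sU2 + Dd - 2 * Real.sqrt (sU2 * De)) / ((sX2 + sU2) * (Dd - De))) := by
  have hbnn : 0 ≤ b := hb ▸ Real.sqrt_nonneg _
  have hb2 : b ^ 2 * sU2 = De := by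
    rw [hb, Real.sq_sqrt (div_nonneg hDe hU.le)]
    field_simp
  have hbs : Real.sqrt (De * sU2) = b * sU2 := by
    have : De * sU2 = (b * sU2) ^ 2 := by nlinarith
    rw [this, Real.sqrt_sq (by positivity)]
  rw [hbs] at h1
  have h1d : b * sU2 < Dd := lt_of_lt_of_le h1 (min_le_left _ _)
  have h1e : b * sU2 < sX2 * sU2 / (sX2 + sU2) := lt_of_lt_of_le h1 (min_le_right _ _)
  have hDdpos : 0 < Dd := lt_of_le_of_lt (by positivity) h1d
  have hblt1 : b < 1 := by
    have h : sX2 * sU2 / (sX2 + sU2) < sU2 := by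
      rw [div_lt_iff₀ (by positivity)]; nlinarith
    have := h1e.trans h
    exact (mul_lt_iff_lt_one_left hU).mp this
  have hDeDd : De < Dd := by nlinarith
  rw [← hb] at h2
  have hK : 0 < sX2 * (1 - b) ^ 2 + De - Dd := by linarith
  have hsWpos : 0 < sW2 := by
    rw [hsW]; exact div_pos (by nlinarith) hK
  have hS : sX2 + sW2 ≠ 0 := by nlinarith
  have hKne : sX2 * (1 - b) ^ 2 + De - Dd ≠ 0 := ne_of_gt hK
  have hW' : sW2 * (sX2 * (1 - b) ^ 2 + De - Dd) = sX2 * (Dd - De) := by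
    rw [hsW]; field_simp
  have ha' : a * (sX2 + sW2) = sX2 * (1 - b) := by
    rw [ha]; field_simp
  have hkey : sW2 * ((1 - b) ^ 2 * sX2) = (Dd - De) * (sX2 + sW2) := by
    linear_combination hW'
  refine ⟨hsWpos, ?_, hb2, ?_⟩
  · rw [show b ^ 2 * sU2 = De from hb2, ha]
    field_simp
    linear_combination (sX2 + sW2) * hkey
  · have h3 : Real.sqrt (sU2 * De) = b * sU2 := by rw [mul_comm]; exact hbs
    have harg : (sX2 * sU2 + sX2 * sW2 + sU2 * sW2) / ((sX2 + sU2) * sW2) =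
        sX2 * (sU2 + Dd - 2 * (b * sU2)) / ((sX2 + sU2) * (Dd - De)) := by
      rw [div_eq_div_iff (by positivity) (by nlinarith [mul_pos (add_pos hX hU) (sub_pos.mpr hDeDd)])]
      linear_combination (sX2 + sU2) * sX2 * sW2 * hb2 - (sX2 + sU2) * sU2 * hW'
    rw [h3, harg]
end
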